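/- Let H be a numerical semigroup of genus g ≥ 1 whose smallest positive element m₁ satisfies m₁ ≥ 3. Then the i-th smallest positive element mᵢ of H satisfies mᵢ ≥ 2i+1 for i = 1,...,g−2, m_{g−1} ≥ 2g−2, and m_g = 2g. -/
import Mathlib


/-- A numerical semigroup: a cofinite subsemigroup of ℕ containing 0. -/
def IsNumSgp (S : Set ℕ) : Prop :=
  0 ∈ S ∧ (∀ a ∈ S, ∀ b ∈ S, a + b ∈ S) ∧ (Sᶜ).Finite

/-- The genus: number of gaps. -/
noncomputable def genus (S : Set ℕ) : ℕ := Sᶜ.ncard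

/-- The j-th smallest positive element (non-gap) of `S`, 1-indexed. -/
noncomputable def nongap (S : Set ℕ) (j : ℕ) : ℕ :=
  Nat.nth (fun n => n ∈ S ∧ 0 < n) (j - 1)

/-- The i-th smallest gap of `S`, 1-indexed. -/
noncomputable def gapNth (S : Set ℕ) (i : ℕ) : ℕ :=
  Nat.nth (fun n => n ∉ S) (i - 1)

/-- The weight of the semigroup. -/
noncomputable def weight (S : Set ℕ) : ℕ :=
  ∑ i ∈ Finset.Icc 1 (genus S), (gapNth S i - i)

/-- The number of even gaps of `S`. -/
noncomputable def evenGaps (S : Set ℕ) : ℕ := {n | n ∉ S ∧ Even n}.ncard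

/-- `S` is γ-hyperelliptic: exactly γ even elements in [2,4γ], and the
(γ+1)-th positive element is 4γ+2. -/
noncomputable def GammaHyper (S : Set ℕ) (γ : ℕ) : Prop :=
  {n ∈ S | Even n ∧ 2 ≤ n ∧ n ≤ 4 * γ}.ncard = γ ∧ nongap S (γ + 1) = 4 * γ + 2

section Helpers

attribute [local instance] Classical.propDecidable

/-- The predicate for positive nongaps. -/
def Pp (S : Set ℕ) : ℕ → Prop := fun n => n ∈ S ∧ 0 < n

/-- The predicate for gaps. -/
def Qp (S : Set ℕ) : ℕ → Prop := fun n => n ∉ S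

variable {S : Set ℕ}

lemma Pp_infinite (hfin : (Sᶜ).Finite) : (setOf (Pp S)).Infinite := by
  have hS : S.Infinite := by simpa using hfin.infinite_compl
  have hdiff : (S \ {0}).Infinite := hS.diff (Set.finite_singleton 0)
  refine hdiff.mono ?_
  intro x hx
  exact ⟨hx.1, Nat.pos_of_ne_zero (by simpa using hx.2)⟩

lemma count_mem_add_count_not (S : Set ℕ) (m : ℕ) :
    Nat.count (fun x => x ∈ S) m + Nat.count (Qp S) m = m := by
  induction m with
  | zero => simp
  | succ m IH =>
    rw [Nat.count_succ, Nat.count_succ]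
    by_cases h : m ∈ S
    · have h' : ¬ Qp S m := by simp [Qp, h]
      simp only [h, h', if_true, if_false]
      omega
    · have h' : Qp S m := h
      simp only [h, h', if_true, if_false]
      omega

lemma count_split (h0 : 0 ∈ S) {n : ℕ} (hn : 1 ≤ n) :
    Nat.count (Pp S) n + Nat.count (Qp S) n + 1 = n := by
  induction n, hn using Nat.le_induction with
  | base =>
    have h1 : Nat.count (Pp S) 1 = 0 := by
      simp [Nat.count_succ, Pp]
    have h2 : Nat.count (Qp S) 1 = 0 := by
      simp [Nat.count_succ, Qp, h0]
    omega
  | succ n hn IH =>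
    rw [Nat.count_succ, Nat.count_succ]
    by_cases hns : n ∈ S
    · have hp : Pp S n := ⟨hns, by omega⟩
      have hq : ¬ Qp S n := by simp [Qp, hns]
      simp only [hp, hq, if_true, if_false]
      omega
    · have hp : ¬ Pp S n := by simp [Pp, hns]
      have hq : Qp S n := hns
      simp only [hp, hq, if_true, if_false]
      omega

lemma gap_pair (hadd : ∀ a ∈ S, ∀ b ∈ S, a + b ∈ S) {n : ℕ} (hn : n ∉ S) :
    n + 1 ≤ 2 * Nat.count (Qp S) (n + 1) := by
  set T := (Finset.range (n+1)).filter (fun x => x ∈ S) with hT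
  set G := (Finset.range (n+1)).filter (fun x => Qp S x) with hG
  have hGcount : Nat.count (Qp S) (n+1) = G.card := by
    rw [Nat.count_eq_card_filter_range]
  have hTcount : Nat.count (fun x => x ∈ S) (n+1) = T.card := by
    rw [Nat.count_eq_card_filter_range]
  have hcard : T.card + G.card = n + 1 := by
    rw [← hTcount, ← hGcount]
    exact count_mem_add_count_not S (n+1)
  have hmap : ∀ x ∈ T, n - x ∈ G := by
    intro x hx
    rw [hT, Finset.mem_filter, Finset.mem_range] at hx
    obtain ⟨hxr, hxs⟩ := hx
    have hxle : x ≤ n := by omega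
    rw [hG, Finset.mem_filter, Finset.mem_range]
    refine ⟨by omega, ?_⟩
    intro hns
    have := hadd x hxs (n - x) hns
    rw [Nat.add_sub_cancel' hxle] at this
    exact hn this
  have hinj : Set.InjOn (fun x => n - x) T := by
    intro a ha b hb hab
    rw [hT, Finset.coe_filter] at ha hb
    simp only [Set.mem_setOf_eq, Finset.mem_range] at ha hb
    simp only at hab
    omega
  have := Finset.card_le_card_of_injOn (fun x => n - x) hmap hinj
  omega

lemma gap_surj (hadd : ∀ a ∈ S, ∀ b ∈ S, a + b ∈ S) {n : ℕ} (hn : n ∉ S)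
    (heq : n + 1 = 2 * Nat.count (Qp S) (n + 1)) {k : ℕ} (hk : k ≤ n) (hks : k ∉ S) :
    n - k ∈ S := by
  set T := (Finset.range (n+1)).filter (fun x => x ∈ S) with hT
  set G := (Finset.range (n+1)).filter (fun x => Qp S x) with hG
  have hGcount : Nat.count (Qp S) (n+1) = G.card := by
    rw [Nat.count_eq_card_filter_range]
  have hTcount : Nat.count (fun x => x ∈ S) (n+1) = T.card := by
    rw [Nat.count_eq_card_filter_range]
  have hcard : T.card + G.card = n + 1 := by
    rw [← hTcount, ← hGcount]
    exact count_mem_add_count_not S (n+1)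
  have hmap : ∀ x ∈ T, n - x ∈ G := by
    intro x hx
    rw [hT, Finset.mem_filter, Finset.mem_range] at hx
    obtain ⟨hxr, hxs⟩ := hx
    have hxle : x ≤ n := by omega
    rw [hG, Finset.mem_filter, Finset.mem_range]
    refine ⟨by omega, ?_⟩
    intro hns
    have := hadd x hxs (n - x) hns
    rw [Nat.add_sub_cancel' hxle] at this
    exact hn this
  have hinj : Set.InjOn (fun x => n - x) T := by
    intro a ha b hb hab
    rw [hT, Finset.coe_filter] at ha hb
    simp only [Set.mem_setOf_eq, Finset.mem_range] at ha hb
    simp only at hab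
    omega
  have hTG : T.card = G.card := by omega
  have hsub : T.image (fun x => n - x) ⊆ G := by
    intro y hy
    rw [Finset.mem_image] at hy
    obtain ⟨x, hx, rfl⟩ := hy
    exact hmap x hx
  have himg : T.image (fun x => n - x) = G := by
    apply Finset.eq_of_subset_of_card_le hsub
    rw [Finset.card_image_of_injOn hinj]
    omega
  have hkG : k ∈ G := by
    rw [hG, Finset.mem_filter, Finset.mem_range]
    exact ⟨by omega, hks⟩
  rw [← himg, Finset.mem_image] at hkG
  obtain ⟨x, hx, hxk⟩ := hkG
  rw [hT, Finset.mem_filter, Finset.mem_range] at hx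
  have : n - k = x := by omega
  rw [this]
  exact hx.2

lemma countQ_le (hfin : (Sᶜ).Finite) (m : ℕ) : Nat.count (Qp S) m ≤ Sᶜ.ncard := by
  rw [Nat.count_eq_card_filter_range, Set.ncard_eq_toFinset_card _ hfin]
  apply Finset.card_le_card
  intro x hx
  rw [Finset.mem_filter] at hx
  rw [Set.Finite.mem_toFinset]
  exact hx.2

lemma countQ_eq_of_all_lt (hfin : (Sᶜ).Finite) {m : ℕ} (h : ∀ n, n ∉ S → n < m) :
    Nat.count (Qp S) m = Sᶜ.ncard := by
  rw [Nat.count_eq_card_filter_range, Set.ncard_eq_toFinset_card _ hfin]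
  congr 1
  ext x
  rw [Finset.mem_filter, Finset.mem_range, Set.Finite.mem_toFinset]
  constructor
  · intro hx; exact hx.2
  · intro hx; exact ⟨h x hx, hx⟩

theorem stmt_0 (S : Set ℕ) (g : ℕ) (hS : IsNumSgp S) (hg : genus S = g)
    (hg1 : 1 ≤ g) (hm1 : 3 ≤ nongap S 1) :
    (∀ i, 1 ≤ i → i ≤ g - 2 → 2 * i + 1 ≤ nongap S i) ∧
    2 * g - 2 ≤ nongap S (g - 1) ∧ nongap S g = 2 * g := by
  obtain ⟨h0, hadd, hfin⟩ := hS
  have hgnc : Sᶜ.ncard = g := hg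
  have hPinf : (setOf (Pp S)).Infinite := Pp_infinite hfin
  have hm1' : 3 ≤ Nat.nth (Pp S) 0 := hm1
  -- small elements are not in S
  have hsmall : ∀ k, k ∈ S → 0 < k → 3 ≤ k := by
    intro k hk hkpos
    have hp : Pp S k := ⟨hk, hkpos⟩
    have h1 := Nat.nth_count (p := Pp S) hp
    have h2 : Nat.nth (Pp S) 0 ≤ Nat.nth (Pp S) (Nat.count (Pp S) k) :=
      (Nat.nth_le_nth hPinf).mpr (Nat.zero_le _)
    omega
  have h1S : 1 ∉ S := fun h => by have := hsmall 1 h (by omega); omega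
  have h2S : 2 ∉ S := fun h => by have := hsmall 2 h (by omega); omega
  -- every gap is < 2g
  have hgap_lt : ∀ n, n ∉ S → n < 2 * g := by
    intro n hn
    have h1 := gap_pair hadd hn
    have h2 := countQ_le hfin (n + 1)
    omega
  have countQ2g : Nat.count (Qp S) (2 * g) = g := by
    rw [countQ_eq_of_all_lt hfin hgap_lt, hgnc]
  -- Goal C : nongap S g = 2g
  have h2gS : 2 * g ∈ S := by
    by_contra h
    have := hgap_lt _ h
    omega
  have hcP2g : Nat.count (Pp S) (2 * g) = g - 1 := by
    have := count_split h0 (n := 2 * g) (by omega)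
    omega
  have goalC : Nat.nth (Pp S) (g - 1) = 2 * g := by
    have hp : Pp S (2 * g) := ⟨h2gS, by omega⟩
    have := Nat.nth_count hp
    rwa [hcP2g] at this
  -- Goal B : 2g - 2 ≤ nongap S (g-1)
  have goalB : 2 * g - 2 ≤ Nat.nth (Pp S) (g - 1 - 1) := by
    rcases eq_or_lt_of_le hg1 with h | hgge2
    · rw [← h]; omega
    · by_contra hcon
      push_neg at hcon
      have hidx : g - 1 - 1 = g - 2 := by omega
      rw [hidx] at hcon
      have hcount : g - 2 < Nat.count (Pp S) (2 * g - 2) :=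
        (Nat.lt_nth_iff_count_lt hPinf).mpr hcon
      have hsplit := count_split h0 (n := 2 * g - 2) (by omega)
      have hQ22 : Nat.count (Qp S) (2 * g - 2) ≤ g - 2 := by omega
      have hq1 : (2 * g - 1) ∉ S := by
        intro hmem
        have e1 : Nat.count (Qp S) (2 * g) = Nat.count (Qp S) (2 * g - 1) := by
          rw [show 2 * g = (2 * g - 1) + 1 by omega, Nat.count_succ]
          simp [Qp, hmem]
        have e2 : Nat.count (Qp S) (2 * g - 1) ≤ Nat.count (Qp S) (2 * g - 2) + 1 := by
          rw [show 2 * g - 1 = (2 * g - 2) + 1 by omega, Nat.count_succ]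
          split_ifs <;> omega
        omega
      have hq2 : (2 * g - 2) ∉ S := by
        intro hmem
        have e1 : Nat.count (Qp S) (2 * g) = Nat.count (Qp S) (2 * g - 1) + 1 := by
          rw [show 2 * g = (2 * g - 1) + 1 by omega, Nat.count_succ]
          simp [Qp, hq1]
        have e2 : Nat.count (Qp S) (2 * g - 1) = Nat.count (Qp S) (2 * g - 2) := by
          rw [show 2 * g - 1 = (2 * g - 2) + 1 by omega, Nat.count_succ]
          simp [Qp, hmem]
        omega
      have heq : (2 * g - 1) + 1 = 2 * Nat.count (Qp S) ((2 * g - 1) + 1) := by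
        rw [show (2 * g - 1) + 1 = 2 * g by omega, countQ2g]
      have := gap_surj hadd hq1 heq (k := 2 * g - 2) (by omega) hq2
      rw [show (2 * g - 1) - (2 * g - 2) = 1 by omega] at this
      exact h1S this
  -- core step for Goal A
  have core : ∀ i, 1 ≤ i → i + 2 ≤ g → 2 * i + 2 ≤ Nat.nth (Pp S) i →
      2 * i + 1 ≤ Nat.nth (Pp S) (i - 1) := by
    intro i hi1 hig hnext
    by_contra hcon
    push_neg at hcon
    have hcP1 : i ≤ Nat.count (Pp S) (2 * i + 1) := by
      have := (Nat.lt_nth_iff_count_lt hPinf (a := i - 1) (b := 2 * i + 1)).mpr hcon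
      omega
    have hcP2 : Nat.count (Pp S) (2 * i + 2) ≤ i :=
      (Nat.count_le_iff_le_nth hPinf).mpr hnext
    have hmono : Nat.count (Pp S) (2 * i + 1) ≤ Nat.count (Pp S) (2 * i + 2) :=
      Nat.count_monotone _ (by omega)
    have h21S : (2 * i + 1) ∉ S := by
      intro hmem
      have hp : Pp S (2 * i + 1) := ⟨hmem, by omega⟩
      have : Nat.count (Pp S) (2 * i + 2) = Nat.count (Pp S) (2 * i + 1) + 1 := by
        rw [show 2 * i + 2 = (2 * i + 1) + 1 by omega, Nat.count_succ]
        simp [hp]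
      omega
    have hs1 := count_split h0 (n := 2 * i + 1) (by omega)
    have hs2 := count_split h0 (n := 2 * i + 2) (by omega)
    have hcQ2 : Nat.count (Qp S) (2 * i + 2) = i + 1 := by omega
    have hbij : ∀ k, k ≤ 2 * i + 1 → k ∉ S → (2 * i + 1) - k ∈ S := by
      intro k hk hks
      exact gap_surj hadd h21S (by rw [show (2 * i + 1) + 1 = 2 * i + 2 by omega, hcQ2]; omega) hk hks
    have hex : ∃ m, 2 * i + 2 ≤ m ∧ m ∉ S := by
      by_contra hc
      push_neg at hc
      have : Nat.count (Qp S) (2 * i + 2) = g := by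
        rw [countQ_eq_of_all_lt hfin, hgnc]
        intro n hn
        by_contra h
        push_neg at h
        exact hn (hc n h)
      omega
    have hQge : ∃ m, 2 * i + 2 ≤ m ∧ m ∉ S := hex
    classical
    set ℓ := Nat.find hQge with hldef
    have hl := Nat.find_spec hQge
    have hlmin : ∀ m, m < ℓ → ¬(2 * i + 2 ≤ m ∧ m ∉ S) := fun m hm => Nat.find_min hQge hm
    have haux : ∀ m, 2 * i + 2 ≤ m → m ≤ ℓ → Nat.count (Qp S) m = i + 1 := by
      intro m hm
      induction m, hm using Nat.le_induction with
      | base => intro _; exact hcQ2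
      | succ m hm IH =>
        intro hml
        have hmS : m ∈ S := by
          by_contra hms
          exact hlmin m (by omega) ⟨hm, hms⟩
        rw [Nat.count_succ]
        have : ¬ Qp S m := by simp [Qp, hmS]
        simp only [this, if_false]
        have := IH (by omega)
        omega
    have hcQl : Nat.count (Qp S) (ℓ + 1) = i + 2 := by
      rw [Nat.count_succ, haux ℓ hl.1 le_rfl]
      have : Qp S ℓ := hl.2
      simp [this]
    have hlb := gap_pair hadd hl.2
    rw [hcQl] at hlb
    have hlcase : ℓ = 2 * i + 2 ∨ ℓ = 2 * i + 3 := by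
      have := hl.1
      omega
    rcases hlcase with h22 | h23
    · -- chain case : both 2i+1 and 2i+2 are gaps
      have h22S : (2 * i + 2) ∉ S := h22 ▸ hl.2
      have chain : ∀ k, 1 ≤ k → k ≤ 2 * i + 1 → k ∉ S := by
        intro k hk
        induction k, hk using Nat.le_induction with
        | base => intro _; exact h1S
        | succ k hk IH =>
          intro hk2
          have hkS : k ∉ S := IH (by omega)
          have hs : (2 * i + 1) - k ∈ S := hbij k (by omega) hkS
          intro hk1S
          have := hadd _ hk1S _ hs
          rw [show (k + 1) + ((2 * i + 1) - k) = 2 * i + 2 by omega] at this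
          exact h22S this
      have h2iS : (2 * i) ∈ S := by
        have := hbij 1 (by omega) h1S
        rwa [show (2 * i + 1) - 1 = 2 * i by omega] at this
      exact chain (2 * i) (by omega) (by omega) h2iS
    · -- second bijection case
      have h23gap : (2 * i + 3) ∉ S := h23 ▸ hl.2
      rw [h23] at hcQl
      have := gap_surj hadd h23gap
        (by rw [hcQl]; omega) (k := 2) (by omega) h2S
      rw [show (2 * i + 3) - 2 = 2 * i + 1 by omega] at this
      exact h21S this
  -- downward induction for Goal A
  have ind : ∀ k i, 1 ≤ i → i + 2 ≤ g → g - 2 - i ≤ k → 2 * i + 1 ≤ Nat.nth (Pp S) (i - 1) := by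
    intro k
    induction k with
    | zero =>
      intro i h1 h2 h3
      have hieq : i = g - 2 := by omega
      apply core i h1 h2
      subst hieq
      have hidx : g - 1 - 1 = g - 2 := by omega
      rw [hidx] at goalB
      rw [show 2 * (g - 2) + 2 = 2 * g - 2 by omega]
      exact goalB
    | succ k IH =>
      intro i h1 h2 h3
      by_cases hk : g - 2 - i ≤ k
      · exact IH i h1 h2 hk
      · have hi : i + 1 + 2 ≤ g := by omega
        have hnext := IH (i + 1) (by omega) hi (by omega)
        apply core i h1 h2
        rw [show i + 1 - 1 = i by omega] at hnext
        omega
  refine ⟨?_, ?_, ?_⟩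
  · intro i hi1 hi2
    have hig : i + 2 ≤ g := by omega
    exact ind (g - 2 - i) i hi1 hig le_rfl
  · exact goalB
  · exact goalC

end Helpers
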